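/- Let m ≥ 1 be a natural number, define the polynomial P(x) = Σ_{ℓ=0}^{m} [(−m − 1/2)_ℓ (−m)_ℓ] / [(1/2 − m)_ℓ ℓ!] · x^{2ℓ}, where (x)_ℓ denotes the rising factorial (Pochhammer symbol) (x)_ℓ = x(x+1)⋯(x+ℓ−1), (x)_0 = 1, set c = −P(1), and define B : [0,1) → ℝ by B(x) = (P(x) + c · x^{2m+1}) / (1 − x²)^m. Then B(0) = 1 and for every x ∈ (0,1), (x − x³) · B''(x) − 2m · B'(x) − (4m · x/(1 − x²)) · B(x) = 0. -/

import Mathlib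

/-- The rising factorial (Pochhammer symbol) `(x)_n = x (x+1) ⋯ (x+n-1)`, `(x)_0 = 1`. -/
noncomputable def risingFactorial (x : ℝ) (n : ℕ) : ℝ := ∏ i ∈ Finset.range n, (x + i)

lemma rf_succ (x : ℝ) (n : ℕ) : risingFactorial x (n+1) = risingFactorial x n * (x + n) := by
  simp [risingFactorial, Finset.prod_range_succ]

lemma half_ne (m l : ℕ) : (1/2 - (m:ℝ) + l) ≠ 0 := by
  intro h
  have h2 : (2*l+1 : ℝ) = 2*m := by linarith
  have : (2*l+1 : ℕ) = 2*m := by exact_mod_cast h2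
  omega

lemma rf_half_ne (m l : ℕ) : risingFactorial (1/2 - (m:ℝ)) l ≠ 0 := by
  unfold risingFactorial
  rw [Finset.prod_ne_zero_iff]
  intro i _
  exact half_ne m i

noncomputable def coefA (m l : ℕ) : ℝ :=
  (risingFactorial (-(m : ℝ) - 1/2) l * risingFactorial (-(m : ℝ)) l) /
    (risingFactorial (1/2 - (m : ℝ)) l * (Nat.factorial l : ℝ))

lemma coefA_rec (m l : ℕ) :
    coefA m (l+1) * ((2*l+2) * ((2*l:ℝ)+1-2*m)) = coefA m l * (((2*m:ℝ)-2*l) * ((2*m:ℝ)-2*l+1)) := by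
  unfold coefA
  rw [rf_succ, rf_succ, rf_succ, Nat.factorial_succ]
  rw [div_mul_eq_mul_div, div_mul_eq_mul_div, div_eq_div_iff (by
      push_cast
      exact mul_ne_zero (mul_ne_zero (rf_half_ne m l) (half_ne m l))
        (mul_ne_zero (by positivity) (Nat.cast_ne_zero.2 (Nat.factorial_ne_zero l))))
    (mul_ne_zero (rf_half_ne m l) (Nat.cast_ne_zero.2 (Nat.factorial_ne_zero l)))]
  push_cast
  ring

noncomputable def Nf (m : ℕ) (c : ℝ) (x : ℝ) : ℝ :=
  (∑ l ∈ Finset.range (m+1), coefA m l * x^(2*l)) + c * x^(2*m+1)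
noncomputable def N1f (m : ℕ) (c : ℝ) (x : ℝ) : ℝ :=
  (∑ l ∈ Finset.range (m+1), coefA m l * (((2*l:ℕ):ℝ) * x^(2*l-1))) + c * (((2*m+1:ℕ):ℝ) * x^(2*m))
noncomputable def N2f (m : ℕ) (c : ℝ) (x : ℝ) : ℝ :=
  (∑ l ∈ Finset.range (m+1), coefA m l * (((2*l:ℕ):ℝ) * (((2*l-1:ℕ):ℝ) * x^(2*l-1-1))))
    + c * (((2*m+1:ℕ):ℝ) * (((2*m:ℕ):ℝ) * x^(2*m-1)))

lemma hasDerivAt_Nf (m : ℕ) (c : ℝ) (x : ℝ) : HasDerivAt (Nf m c) (N1f m c x) x := by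
  unfold Nf N1f
  apply HasDerivAt.add
  · exact HasDerivAt.fun_sum (fun l _ => (hasDerivAt_pow (2*l) x).const_mul _)
  · exact (hasDerivAt_pow (2*m+1) x).const_mul c

lemma hasDerivAt_N1f (m : ℕ) (c : ℝ) (x : ℝ) : HasDerivAt (N1f m c) (N2f m c x) x := by
  unfold N1f N2f
  apply HasDerivAt.add
  · apply HasDerivAt.fun_sum
    intro l _
    have h := (hasDerivAt_pow (2*l-1) x).const_mul (coefA m l * ((2*l:ℕ):ℝ))
    simpa [mul_assoc] using h
  · have h := (hasDerivAt_pow (2*m) x).const_mul (c * ((2*m+1:ℕ):ℝ))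
    simpa [mul_assoc] using h

lemma term_id (m l : ℕ) (A x : ℝ) :
    x*(1-x^2)*(A * (((2*l:ℕ):ℝ) * (((2*l-1:ℕ):ℝ) * x^(2*l-1-1))))
      + (4*(m:ℝ)*x^2-2*m)*(A * (((2*l:ℕ):ℝ) * x^(2*l-1)))
      - (4*(m:ℝ)^2+2*m)*x*(A * x^(2*l))
    = A * (((2*l:ℕ):ℝ) * ((2*l:ℝ)-1-2*m)) * x^(2*l-1)
      - A * ((((2*m:ℝ)-2*l) * ((2*m:ℝ)-2*l+1))) * x^(2*l+1) := by
  cases l with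
  | zero => norm_num; ring
  | succ k =>
    have e1 : 2*(k+1)-1 = 2*k+1 := by omega
    have e2 : 2*(k+1)-1-1 = 2*k := by omega
    rw [e2, e1]
    push_cast
    ring

lemma Node (m : ℕ) (hm : 1 ≤ m) (c x : ℝ) :
    x*(1-x^2)*N2f m c x + (4*(m:ℝ)*x^2-2*m)*N1f m c x - (4*(m:ℝ)^2+2*m)*x*Nf m c x = 0 := by
  obtain ⟨k, rfl⟩ : ∃ k, m = k + 1 := ⟨m - 1, by omega⟩
  unfold Nf N1f N2f
  have hc : x*(1-x^2)*(c * (((2*(k+1)+1:ℕ):ℝ) * (((2*(k+1):ℕ):ℝ) * x^(2*(k+1)-1))))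
      + (4*((k+1:ℕ):ℝ)*x^2-2*((k+1:ℕ):ℝ))*(c * (((2*(k+1)+1:ℕ):ℝ) * x^(2*(k+1))))
      - (4*((k+1:ℕ):ℝ)^2+2*((k+1:ℕ):ℝ))*x*(c * x^(2*(k+1)+1)) = 0 := by
    rw [show 2*(k+1)-1 = 2*k+1 by omega, show 2*(k+1) = 2*k+2 by omega]
    push_cast
    ring
  have hsum : x*(1-x^2)*(∑ l ∈ Finset.range (k+1+1), coefA (k+1) l * (((2*l:ℕ):ℝ) * (((2*l-1:ℕ):ℝ) * x^(2*l-1-1))))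
      + (4*((k+1:ℕ):ℝ)*x^2-2*((k+1:ℕ):ℝ))*(∑ l ∈ Finset.range (k+1+1), coefA (k+1) l * (((2*l:ℕ):ℝ) * x^(2*l-1)))
      - (4*((k+1:ℕ):ℝ)^2+2*((k+1:ℕ):ℝ))*x*(∑ l ∈ Finset.range (k+1+1), coefA (k+1) l * x^(2*l)) = 0 := by
    rw [Finset.mul_sum, Finset.mul_sum, Finset.mul_sum, ← Finset.sum_add_distrib,
        ← Finset.sum_sub_distrib]
    have step : ∀ l ∈ Finset.range (k+1+1),
        x*(1-x^2)*(coefA (k+1) l * (((2*l:ℕ):ℝ) * (((2*l-1:ℕ):ℝ) * x^(2*l-1-1))))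
          + (4*((k+1:ℕ):ℝ)*x^2-2*((k+1:ℕ):ℝ))*(coefA (k+1) l * (((2*l:ℕ):ℝ) * x^(2*l-1)))
          - (4*((k+1:ℕ):ℝ)^2+2*((k+1:ℕ):ℝ))*x*(coefA (k+1) l * x^(2*l))
        = coefA (k+1) l * (((2*l:ℕ):ℝ) * ((2*l:ℝ)-1-2*((k+1:ℕ):ℝ))) * x^(2*l-1)
          - coefA (k+1) l * (((2*((k+1:ℕ):ℝ)-2*l) * (2*((k+1:ℕ):ℝ)-2*l+1))) * x^(2*l+1) :=
      fun l _ => term_id (k+1) l (coefA (k+1) l) x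
    rw [Finset.sum_congr rfl step, Finset.sum_sub_distrib]
    rw [Finset.sum_range_succ' (fun l => coefA (k+1) l * (((2*l:ℕ):ℝ) * ((2*l:ℝ)-1-2*((k+1:ℕ):ℝ))) * x^(2*l-1))]
    rw [Finset.sum_range_succ (fun l => coefA (k+1) l * (((2*((k+1:ℕ):ℝ)-2*l) * (2*((k+1:ℕ):ℝ)-2*l+1))) * x^(2*l+1))]
    norm_num
    rw [← Finset.sum_sub_distrib]
    apply Finset.sum_eq_zero
    intro l _
    rw [show 2*(l+1)-1 = 2*l+1 by omega]
    have h := coefA_rec (k+1) l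
    push_cast at h ⊢
    linear_combination x^(2*l+1) * h
  linear_combination hsum + hc

/-- The radial part `B = (P(x) + c x^(2m+1))/(1-x²)^m` of the explicit Jacobi field on the
geodesic hemisphere `HS^(2m) ⊂ ℍ^(2m+1)` satisfies `B(0) = 1` and solves
`(x - x³) B'' - 2m B' - (4m x/(1-x²)) B = 0` on `(0,1)`, where
`P(x) = ₂F₁(-m, -m-1/2; 1/2-m; x²)` and `c = -P(1)`. -/
theorem jacobi_ode_solution_general (m : ℕ) (hm : 1 ≤ m)
    (P : ℝ → ℝ)
    (hP : ∀ x : ℝ, P x = ∑ ℓ ∈ Finset.range (m + 1),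
        (risingFactorial (-(m : ℝ) - 1/2) ℓ * risingFactorial (-(m : ℝ)) ℓ) /
            (risingFactorial (1/2 - (m : ℝ)) ℓ * (Nat.factorial ℓ : ℝ)) * x ^ (2 * ℓ))
    (c : ℝ) (hc : c = -P 1)
    (B : ℝ → ℝ)
    (hB : ∀ x : ℝ, B x = (P x + c * x ^ (2 * m + 1)) / (1 - x ^ 2) ^ m) :
    B 0 = 1 ∧ ∀ x ∈ Set.Ioo (0 : ℝ) 1,
      (x - x ^ 3) * deriv (deriv B) x - 2 * (m : ℝ) * deriv B x -
        (4 * (m : ℝ) * x / (1 - x ^ 2)) * B x = 0 := by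
  have hPA : ∀ x : ℝ, P x = ∑ l ∈ Finset.range (m+1), coefA m l * x^(2*l) := by
    intro x; rw [hP]; rfl
  have hBN : B = fun x => Nf m c x / (1 - x^2)^m := by
    funext x; rw [hB, hPA, Nf]
  constructor
  · rw [hBN]
    have h0 : Nf m c 0 = 1 := by
      unfold Nf
      rw [Finset.sum_eq_single 0]
      · simp [coefA, risingFactorial]
      · intro l _ hl
        simp [pow_eq_zero_iff, hl]
      · simp
    simp only [h0]
    norm_num
  · intro x hx
    obtain ⟨k, rfl⟩ : ∃ k, m = k + 1 := ⟨m - 1, by omega⟩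
    have hu : (1 : ℝ) - x^2 ≠ 0 := by nlinarith [hx.1, hx.2]
    -- derivative of the inner function 1 - y^2
    have h2 : ∀ y : ℝ, HasDerivAt (fun y : ℝ => 1 - y^2) (-(2*y)) y := by
      intro y
      simpa using (hasDerivAt_pow 2 y).const_sub 1
    have hQ : ∀ y : ℝ, HasDerivAt (fun y : ℝ => (1-y^2)^(k+1))
        (((k+1:ℕ):ℝ) * (1-y^2)^k * (-(2*y))) y := fun y => (h2 y).pow (k+1)
    set Q1 : ℝ → ℝ := fun y => ((k+1:ℕ):ℝ) * (1-y^2)^k * (-(2*y)) with hQ1def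
    set D1 : ℝ → ℝ := fun y =>
      (N1f (k+1) c y * (1-y^2)^(k+1) - Nf (k+1) c y * Q1 y) / ((1-y^2)^(k+1))^2 with hD1def
    have hB' : ∀ y : ℝ, 1 - y^2 ≠ 0 → HasDerivAt B (D1 y) y := by
      intro y hy
      rw [hBN]
      exact (hasDerivAt_Nf (k+1) c y).div (hQ y) (pow_ne_zero _ hy)
    have hdB : ∀ y : ℝ, 1 - y^2 ≠ 0 → deriv B y = D1 y :=
      fun y hy => (hB' y hy).deriv
    -- second derivative
    have hw : (↑k:ℝ) * (1-x^2)^(k-1) = ↑k * (1-x^2)^k / (1-x^2) := by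
      rw [eq_div_iff hu]
      cases k with
      | zero => simp
      | succ j =>
        rw [show j+1-1 = j from rfl]
        ring
    have hg : HasDerivAt (fun y : ℝ => -(2*y)) (-2) x := by
      simpa using (hasDerivAt_id x).const_mul (-2 : ℝ)
    have hf : HasDerivAt (fun y : ℝ => ((k+1:ℕ):ℝ) * (1-y^2)^k)
        (((k+1:ℕ):ℝ) * (((k:ℕ):ℝ) * (1-x^2)^(k-1) * (-(2*x)))) x :=
      ((h2 x).pow k).const_mul _
    have hQ1' : HasDerivAt Q1
        ((((k+1:ℕ):ℝ) * (((k:ℕ):ℝ) * (1-x^2)^k / (1-x^2) * (-(2*x)))) * (-(2*x))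
          + (((k+1:ℕ):ℝ) * (1-x^2)^k) * (-2)) x := by
      have h := hf.mul hg
      rw [hw] at h
      exact h
    set q2 : ℝ := (((k+1:ℕ):ℝ) * (((k:ℕ):ℝ) * (1-x^2)^k / (1-x^2) * (-(2*x)))) * (-(2*x))
      + (((k+1:ℕ):ℝ) * (1-x^2)^k) * (-2) with hq2def
    have hnum : HasDerivAt (fun y => N1f (k+1) c y * (1-y^2)^(k+1) - Nf (k+1) c y * Q1 y)
        ((N2f (k+1) c x * (1-x^2)^(k+1) + N1f (k+1) c x * Q1 x)
          - (N1f (k+1) c x * Q1 x + Nf (k+1) c x * q2)) x := by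
      have hb := (hasDerivAt_Nf (k+1) c x).mul hQ1'
      have h := ((hasDerivAt_N1f (k+1) c x).mul (hQ x)).sub hb
      simp only [hQ1def] at h ⊢
      exact h
    have hden : HasDerivAt (fun y : ℝ => ((1-y^2)^(k+1))^2)
        ((2:ℕ) * ((1-x^2)^(k+1))^(2-1) * Q1 x) x := (hQ x).pow 2
    have hD1' : HasDerivAt D1
        ((((N2f (k+1) c x * (1-x^2)^(k+1) + N1f (k+1) c x * Q1 x)
            - (N1f (k+1) c x * Q1 x + Nf (k+1) c x * q2)) * ((1-x^2)^(k+1))^2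
          - (N1f (k+1) c x * (1-x^2)^(k+1) - Nf (k+1) c x * Q1 x)
            * ((2:ℕ) * ((1-x^2)^(k+1))^(2-1) * Q1 x)) / (((1-x^2)^(k+1))^2)^2) x := by
      rw [hD1def]
      exact hnum.div hden (pow_ne_zero 2 (pow_ne_zero _ hu))
    have hUopen : IsOpen {y : ℝ | 1 - y^2 ≠ 0} := by
      have hcont : Continuous fun y : ℝ => 1 - y^2 := continuous_const.sub (continuous_pow 2)
      exact isOpen_compl_singleton.preimage hcont
    have hev : deriv B =ᶠ[nhds x] D1 := by
      filter_upwards [hUopen.mem_nhds hu] with y hy using hdB y hy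
    have hdd : deriv (deriv B) x
        = (((N2f (k+1) c x * (1-x^2)^(k+1) + N1f (k+1) c x * Q1 x)
            - (N1f (k+1) c x * Q1 x + Nf (k+1) c x * q2)) * ((1-x^2)^(k+1))^2
          - (N1f (k+1) c x * (1-x^2)^(k+1) - Nf (k+1) c x * Q1 x)
            * ((2:ℕ) * ((1-x^2)^(k+1))^(2-1) * Q1 x)) / (((1-x^2)^(k+1))^2)^2 := by
      rw [hev.deriv_eq]
      exact hD1'.deriv
    have E := Node (k+1) (by omega) c x
    rw [hdd, hdB x hu, hBN, hD1def]
    simp only [hQ1def, hq2def]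
    norm_num
    push_cast at E ⊢
    field_simp [hu]
    linear_combination (((1-x^2)^k)^2 * (1-x^2)^3) * E
  done
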